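/- Let b = Π_{j=1}^N b_{a_j} be a finite Blaschke product, J₀(z) = z·b′(z)/(N·b(z)) on 𝕋, and Γ_b the unique bounded operator on L²(𝕋) with Γ_b e_n = bⁿ for all n ∈ ℤ. Then the operator Γ_b*π(J₀) maps H²(𝕋) into H²(𝕋) (equivalently, the canonical transfer operator 𝓛 = Γ_b*π(J₀) leaves H²(𝕋) invariant). -/

import Mathlib

open MeasureTheory Complex ComplexConjugate Topology

set_option maxHeartbeats 1000000
set_option synthInstance.maxHeartbeats 1000000

noncomputable section

namespace CompEnd

instance : MeasurableSpace Circle := borel Circle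
instance : BorelSpace Circle := ⟨rfl⟩

/-- normalized Haar (Lebesgue) measure `m` on the unit circle `𝕋` -/
def m : Measure Circle := Measure.haarMeasure ⊤

instance : IsFiniteMeasure m := by unfold m; infer_instance

/-- `L²(𝕋)` -/
abbrev L2 := Lp ℂ 2 m
/-- `L∞(𝕋)` -/
abbrev Linf := Lp ℂ ⊤ m

/-- the continuous function `z ↦ zⁿ` on the circle -/
def χ (n : ℤ) : C(Circle, ℂ) :=
  ⟨fun z => ((z ^ n : Circle) : ℂ), continuous_subtype_val.comp (continuous_zpow n)⟩

/-- the exponential basis vector `eₙ(z) = zⁿ` of `L²(𝕋)` -/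
def e (n : ℤ) : L2 := ContinuousMap.toLp 2 m ℂ (χ n)

open Classical in
/-- the element of `L²(𝕋)` determined by a square-integrable function (junk value `0`
otherwise) -/
def toL2 (φ : Circle → ℂ) : L2 := if h : MemLp φ 2 m then h.toLp φ else 0

open Classical in
/-- the element of `L∞(𝕋)` determined by an essentially bounded function (junk value `0`
otherwise) -/
def toLinf (φ : Circle → ℂ) : Linf := if h : MemLp φ ⊤ m then h.toLp φ else 0

/-- the Hardy space `H²(𝕋)`: the closed linear span of `{eₙ : n ≥ 0}` in `L²(𝕋)` -/
def H2 : Submodule ℂ L2 := (Submodule.span ℂ (Set.range fun n : ℕ => e n)).topologicalClosure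

lemma H2_isClosed : IsClosed (H2 : Set L2) := Submodule.isClosed_topologicalClosure _

instance : CompleteSpace H2 := H2_isClosed.completeSpace_coe

lemma e_mem_H2 (n : ℕ) : e n ∈ H2 :=
  Submodule.le_topologicalClosure _ (Submodule.subset_span ⟨n, rfl⟩)

/-- multiplication operator on `L²(𝕋)` by an essentially bounded function -/
def mulCLM (φ : Circle → ℂ) (hφ : MemLp φ ⊤ m) : L2 →L[ℂ] L2 :=
  LinearMap.mkContinuous
    { toFun := fun f => ((Lp.memLp f).smul (r := 2) hφ).toLp (φ • ⇑f)
      map_add' := by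
        intro f g
        rw [← MemLp.toLp_add]
        apply MemLp.toLp_congr
        filter_upwards [Lp.coeFn_add f g] with x hx
        simp only [Pi.add_apply] at hx
        simp only [Pi.smul_apply, smul_eq_mul, Pi.mul_apply, Pi.add_apply, hx]
        ring
      map_smul' := by
        intro c f
        simp only [RingHom.id_apply]
        rw [← MemLp.toLp_const_smul c ((Lp.memLp f).smul (r := 2) hφ)]
        apply MemLp.toLp_congr
        filter_upwards [Lp.coeFn_smul c f] with x hx
        simp only [Pi.smul_apply, smul_eq_mul, Pi.mul_apply] at hx ⊢
        rw [hx]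
        ring }
    (eLpNorm φ ⊤ m).toReal
    (by
      intro f
      simp only [LinearMap.coe_mk, AddHom.coe_mk]
      rw [Lp.norm_toLp, Lp.norm_def]
      rw [← ENNReal.toReal_mul]
      apply ENNReal.toReal_mono
      · exact ENNReal.mul_ne_top hφ.2.ne (Lp.eLpNorm_ne_top f)
      · exact eLpNorm_smul_le_eLpNorm_top_mul_eLpNorm 2 (Lp.aestronglyMeasurable f) φ)

open Classical in
/-- the multiplication operator `π(φ)` on `L²(𝕋)` (junk value `0` if `φ` is not
essentially bounded) -/
def mul (φ : Circle → ℂ) : L2 →L[ℂ] L2 :=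
  if h : MemLp φ ⊤ m then mulCLM φ h else 0

/-- the multiplication operator `π(φ)` for `φ ∈ L∞(𝕋)` -/
def mulL (φ : Linf) : L2 →L[ℂ] L2 := mulCLM ⇑φ (Lp.memLp φ)

/-- the Toeplitz operator `τ(φ)` on `H²(𝕋)`, i.e. the compression `P π(φ) P` of `π(φ)`
to the Hardy space -/
def toep (φ : Circle → ℂ) : H2 →L[ℂ] H2 :=
  (H2.orthogonalProjectionOnto).comp ((mul φ).comp (Submodule.subtypeL H2))

/-- the Toeplitz operator `τ(φ)` for `φ ∈ L∞(𝕋)` -/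
def toepL (φ : Linf) : H2 →L[ℂ] H2 :=
  (H2.orthogonalProjectionOnto).comp ((mulL φ).comp (Submodule.subtypeL H2))

/-- the `n`-th Fourier coefficient `f̂(n) = ∫ f(z) z̄ⁿ dm(z)` -/
def coeff (f : Circle → ℂ) (n : ℤ) : ℂ := ∫ z, f z * conj (χ n z) ∂m

/-- a boundary inner function: `b ∈ L∞(𝕋)` with `|b| = 1` a.e. and `b̂(n) = 0` for `n < 0` -/
def IsBdryInner (b : Circle → ℂ) : Prop :=
  Measurable b ∧ (∀ᵐ z ∂m, ‖b z‖ = 1) ∧ ∀ n : ℤ, n < 0 → coeff b n = 0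

/-- pointwise integer powers of a unimodular function, with `b⁻ᵏ = conj(b)ᵏ` for `k > 0` -/
def zpowFun (b : Circle → ℂ) (n : ℤ) : Circle → ℂ := fun z =>
  if 0 ≤ n then b z ^ n.toNat else conj (b z) ^ (-n).toNat

/-- the space `𝒟 = H²(𝕋) ⊖ π(b)H²(𝕋)` -/
def D (b : Circle → ℂ) : Submodule ℂ L2 := H2 ⊓ (Submodule.map (mul b).toLinearMap H2)ᗮ

open Classical in
/-- a Cuntz family of isometries on a Hilbert space:  `Sᵢ* Sⱼ = δᵢⱼ I` and
`Σᵢ Sᵢ Sᵢ* = I` in the strong operator topology -/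
def IsCuntzFamily {H : Type*} [NormedAddCommGroup H] [InnerProductSpace ℂ H]
    [CompleteSpace H] {I : Type*} (S : I → H →L[ℂ] H) : Prop :=
  (∀ i j : I, (ContinuousLinearMap.adjoint (S i)).comp (S j) =
      if i = j then ContinuousLinearMap.id ℂ H else 0) ∧
  ∀ f : H, HasSum (fun i => S i (ContinuousLinearMap.adjoint (S i) f)) f

/-- the weak-* topology `σ(L∞(𝕋), L¹(𝕋))` on `L∞(𝕋)` -/
def wstar : TopologicalSpace Linf :=
  TopologicalSpace.induced (fun φ : Linf => fun g : Lp ℂ 1 m => ∫ z, φ z * g z ∂m)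
    Pi.topologicalSpace

/-- pointwise product in `L∞(𝕋)` -/
def sMul (x y : Linf) : Linf := toLinf fun z => x z * y z
/-- the involution (pointwise complex conjugation) on `L∞(𝕋)` -/
def sStar (x : Linf) : Linf := toLinf fun z => conj (x z)
/-- the unit of `L∞(𝕋)` -/
def sOne : Linf := toLinf fun _ => 1

/-- a unital *-endomorphism of `L∞(𝕋)` -/
def IsStarEndo (β : Linf → Linf) : Prop :=
  (∀ x y, β (x + y) = β x + β y) ∧ (∀ (c : ℂ) (x), β (c • x) = c • β x) ∧
  (∀ x y, β (sMul x y) = sMul (β x) (β y)) ∧ (∀ x, β (sStar x) = sStar (β x)) ∧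
  β sOne = sOne

/-- the basis functions `eₙ` as elements of `L∞(𝕋)` -/
def eInf (n : ℤ) : Linf := toLinf (χ n)

/-- `β` is the endomorphism of `L∞(𝕋)` of composition with `b`: the (unique) weak-*
continuous unital *-endomorphism satisfying `β(eₙ) = bⁿ` for all `n ∈ ℤ` -/
def IsBeta (b : Circle → ℂ) (β : Linf → Linf) : Prop :=
  IsStarEndo β ∧ Continuous[wstar, wstar] β ∧ ∀ n : ℤ, β (eInf n) = toLinf (zpowFun b n)

/-- the Blaschke factor `b_a` with zero `a` -/
def blaschkeFactor (a : ℂ) : ℂ → ℂ := fun z =>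
  if a = 0 then z else ((‖a‖ : ℂ) / a) * ((a - z) / (1 - conj a * z))

/-- the finite Blaschke product with zeros `a 0, …, a (N-1)` (with multiplicity) -/
def finBlaschke {N : ℕ} (a : Fin N → ℂ) : ℂ → ℂ := fun z => ∏ j, blaschkeFactor (a j) z

/-- restriction of a function on `ℂ` to the unit circle -/
def res (f : ℂ → ℂ) : Circle → ℂ := fun z => f (z : ℂ)

/-- the function `J₀(z) = z b′(z) / (N b(z))` -/
def J0 {N : ℕ} (a : Fin N → ℂ) : ℂ → ℂ := fun z =>
  z * deriv (finBlaschke a) z / (N * finBlaschke a z)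

open Classical in
/-- a complex number of modulus one, regarded as an element of the circle (junk value `1`
otherwise) -/
def toCircle (w : ℂ) : Circle :=
  if h : ‖w‖ = 1 then (⟨w, by simpa [Submonoid.unitSphere] using h⟩ : Circle) else 1

/-- a finite Blaschke product as a self-map of the circle -/
def bCircle {N : ℕ} (a : Fin N → ℂ) : Circle → Circle := fun z => toCircle (finBlaschke a z)

/-- `Γ` is the operator of composition with the finite Blaschke product determined by `a`:
the (unique) bounded operator on `L²(𝕋)` with `Γ(eₙ) = bⁿ` for all `n ∈ ℤ` -/
def IsGamma {N : ℕ} (a : Fin N → ℂ) (Γ : L2 →L[ℂ] L2) : Prop :=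
  ∀ n : ℤ, Γ (e n) = toL2 (zpowFun (res (finBlaschke a)) n)

/-- `ψ` is (a representative of) the canonical transfer operator `𝓛` applied to `φ`:
`∫ ψ χ dm = ∫ J₀ φ (χ∘b) dm` for every continuous `χ` -/
def IsTransfer {N : ℕ} (a : Fin N → ℂ) (φ ψ : Circle → ℂ) : Prop :=
  ∀ g : C(Circle, ℂ), ∫ z, ψ z * g z ∂m = ∫ z, J0 a (z : ℂ) * φ z * g (bCircle a z) ∂m

open Classical in
/-- restriction of an operator on `L²(𝕋)` to `H²(𝕋)` (junk value `0` if `H²(𝕋)` is not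
invariant) -/
def rest (S : L2 →L[ℂ] L2) : H2 →L[ℂ] H2 :=
  if h : ∀ f : L2, f ∈ H2 → S f ∈ H2 then
    ⟨{ toFun := fun f => ⟨S f.1, h f.1 f.2⟩
       map_add' := fun f g => Subtype.ext (by simp)
       map_smul' := fun c f => Subtype.ext (by simp) },
     (S.continuous.comp continuous_subtype_val).subtype_mk _⟩
  else 0




-- ===================== auxiliary lemmas =====================

local notation "⟪" x ", " y "⟫" => @inner ℂ _ _ x y

instance : Measure.IsMulLeftInvariant m := by unfold m; infer_instance
instance : m.Regular := by unfold m; infer_instance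

instance : IsProbabilityMeasure m := by
  constructor
  unfold m
  rw [← TopologicalSpace.PositiveCompacts.coe_top (α := Circle)]
  exact Measure.haarMeasure_self

lemma coe_zpow' (z : Circle) (n : ℤ) : ((z ^ n : Circle) : ℂ) = (z : ℂ) ^ n := by
  induction n using Int.rec with
  | ofNat k => push_cast [Int.ofNat_eq_coe, zpow_natCast]; norm_cast
  | negSucc k =>
    rw [zpow_negSucc, zpow_negSucc, Circle.coe_inv]
    norm_cast

lemma χ_apply (n : ℤ) (z : Circle) : χ n z = (z : ℂ) ^ n := coe_zpow' z n

lemma continuous_χ (n : ℤ) : Continuous (χ n) := (χ n).continuous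

lemma memLp_top_of_continuous {f : Circle → ℂ} (hf : Continuous f) : MemLp f ⊤ m :=
  hf.memLp_top_of_hasCompactSupport (isClosed_tsupport f).isCompact m

lemma memLp_two_of_continuous {f : Circle → ℂ} (hf : Continuous f) : MemLp f 2 m :=
  (memLp_top_of_continuous hf).mono_exponent le_top

lemma exp_npow (t : ℝ) (k : ℕ) : Circle.exp t ^ k = Circle.exp (k * t) := by
  induction k with
  | zero => simp [Circle.exp_zero]
  | succ k ih =>
    rw [pow_succ, ih, ← Circle.exp_add]
    push_cast
    ring_nf

lemma exp_zpow (t : ℝ) (j : ℤ) : Circle.exp t ^ j = Circle.exp (j * t) := by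
  induction j using Int.rec with
  | ofNat k => rw [Int.ofNat_eq_coe, zpow_natCast, exp_npow]; norm_num
  | negSucc k =>
    rw [zpow_negSucc, exp_npow, ← Circle.exp_neg]
    congr 1
    push_cast
    ring

/-- integral of a nontrivial character vanishes -/
lemma integral_char {j : ℤ} (hj : j ≠ 0) : ∫ z : Circle, ((z : ℂ)) ^ j ∂m = 0 := by
  set w : Circle := Circle.exp (Real.pi / j) with hw
  have hwj : ((w ^ j : Circle) : ℂ) = -1 := by
    rw [hw, exp_zpow, mul_div_cancel₀ _ (by exact_mod_cast hj : (j : ℝ) ≠ 0), Circle.coe_exp]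
    simpa using Complex.exp_pi_mul_I
  have hinv : ∫ z : Circle, ((w * z : Circle) : ℂ) ^ j ∂m = ∫ z : Circle, ((z : ℂ)) ^ j ∂m :=
    MeasureTheory.integral_mul_left_eq_self (fun z : Circle => ((z : ℂ)) ^ j) w
  have hrw : ∀ z : Circle, ((w * z : Circle) : ℂ) ^ j = ((w ^ j : Circle) : ℂ) * (z : ℂ) ^ j := by
    intro z
    rw [Circle.coe_mul, mul_zpow, coe_zpow' w j]
  simp_rw [hrw, hwj] at hinv
  rw [MeasureTheory.integral_const_mul] at hinv
  have h2 : (2 : ℂ) * ∫ z : Circle, ((z : ℂ)) ^ j ∂m = 0 := by linear_combination -hinv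
  exact (mul_eq_zero.mp h2).resolve_left two_ne_zero


lemma inner_e {i j : ℤ} (h : i ≠ j) : ⟪e i, e j⟫ = 0 := by
  have hcal : ⟪e i, e j⟫ = ∫ z : Circle, ((z : ℂ)) ^ (j - i) ∂m := by
    rw [MeasureTheory.L2.inner_def]
    apply integral_congr_ae
    filter_upwards [ContinuousMap.coeFn_toLp (p := 2) (μ := m) (𝕜 := ℂ) (χ i), ContinuousMap.coeFn_toLp (p := 2) (μ := m) (𝕜 := ℂ) (χ j)]
      with z hz1 hz2
    rw [show (e i) z = χ i z from hz1, show (e j) z = χ j z from hz2, RCLike.inner_apply,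
      χ_apply, χ_apply, map_zpow₀ (starRingEnd ℂ), ← Circle.coe_inv_eq_conj, Circle.coe_inv,
      inv_zpow, ← zpow_neg, ← zpow_add₀ (Circle.coe_ne_zero z)]
    ring_nf
  rw [hcal]
  exact integral_char (sub_ne_zero.mpr (Ne.symm h))

lemma chi_mul (i j : ℤ) : χ i * χ j = χ (i + j) := by
  ext z
  simp only [ContinuousMap.mul_apply, χ_apply]
  rw [zpow_add₀ (Circle.coe_ne_zero z)]

lemma chi_zero_eq_one : χ 0 = 1 := by
  ext z
  simp [χ_apply]

/-- the star subalgebra of trigonometric polynomials -/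
def charAlg : StarSubalgebra ℂ C(Circle, ℂ) where
  carrier := (Submodule.span ℂ (Set.range χ) : Set C(Circle, ℂ))
  mul_mem' := by
    intro x y hx hy
    simp only [SetLike.mem_coe] at *
    induction hx, hy using Submodule.span_induction₂ with
    | mem_mem u v hu hv =>
      obtain ⟨i, rfl⟩ := hu
      obtain ⟨j, rfl⟩ := hv
      exact Submodule.subset_span ⟨i + j, (chi_mul i j).symm⟩
    | zero_left v hv => rw [zero_mul]; exact zero_mem _
    | zero_right u hu => rw [mul_zero]; exact zero_mem _
    | add_left u v w hu hv hw h1 h2 => rw [add_mul]; exact add_mem h1 h2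
    | add_right u v w hu hv hw h1 h2 => rw [mul_add]; exact add_mem h1 h2
    | smul_left c u v hu hv h1 => rw [smul_mul_assoc]; exact Submodule.smul_mem _ _ h1
    | smul_right c u v hu hv h1 => rw [mul_smul_comm]; exact Submodule.smul_mem _ _ h1
  one_mem' := Submodule.subset_span ⟨0, chi_zero_eq_one⟩
  add_mem' := fun hx hy => add_mem hx hy
  zero_mem' := zero_mem _
  algebraMap_mem' := fun c => by
    rw [Algebra.algebraMap_eq_smul_one]
    exact Submodule.smul_mem _ _ (Submodule.subset_span ⟨0, chi_zero_eq_one⟩)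
  star_mem' := by
    intro x hx
    simp only [SetLike.mem_coe] at *
    induction hx using Submodule.span_induction with
    | mem u hu =>
      obtain ⟨i, rfl⟩ := hu
      refine Submodule.subset_span ⟨-i, ?_⟩
      ext z
      simp only [ContinuousMap.star_apply, χ_apply, RCLike.star_def]
      rw [map_zpow₀ (starRingEnd ℂ) _ i, ← Circle.coe_inv_eq_conj, Circle.coe_inv, inv_zpow,
        ← zpow_neg]
    | zero => rw [star_zero]; exact zero_mem _
    | add u v hu hv h1 h2 => rw [star_add]; exact add_mem h1 h2
    | smul c u hu h1 => rw [star_smul]; exact Submodule.smul_mem _ _ h1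

lemma charAlg_separates : charAlg.SeparatesPoints := by
  intro x y hxy
  refine ⟨⇑(χ 1), ⟨χ 1, Submodule.subset_span ⟨1, rfl⟩, rfl⟩, ?_⟩
  simp only [χ_apply, zpow_one]
  exact fun hc => hxy (Circle.coe_injective hc)

lemma toLp_mem_closure (g : C(Circle, ℂ)) :
    (ContinuousMap.toLp 2 m ℂ g : L2) ∈
      (Submodule.span ℂ (Set.range fun n : ℤ => e n)).topologicalClosure := by
  have htop := ContinuousMap.starSubalgebra_topologicalClosure_eq_top_of_separatesPoints
    charAlg charAlg_separates
  have hg : g ∈ closure (charAlg : Set C(Circle, ℂ)) := by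
    have : g ∈ charAlg.topologicalClosure := by rw [htop]; trivial
    exact this
  have hmap : (ContinuousMap.toLp 2 m ℂ (E := ℂ)) '' (charAlg : Set C(Circle, ℂ)) ⊆
      ↑(Submodule.span ℂ (Set.range fun n : ℤ => e n)) := by
    rintro _ ⟨u, hu, rfl⟩
    have hu' : u ∈ Submodule.span ℂ (Set.range χ) := hu
    have := Submodule.apply_mem_span_image_of_mem_span
      (ContinuousMap.toLp 2 m ℂ (E := ℂ) : C(Circle, ℂ) →ₗ[ℂ] L2) hu'
    refine Submodule.span_mono ?_ this
    rintro _ ⟨_, ⟨n, rfl⟩, rfl⟩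
    exact ⟨n, rfl⟩
  have hcl : (ContinuousMap.toLp 2 m ℂ (E := ℂ)) g ∈
      closure ((ContinuousMap.toLp 2 m ℂ (E := ℂ)) '' (charAlg : Set C(Circle, ℂ))) := by
    exact image_closure_subset_closure_image (ContinuousMap.toLp 2 m ℂ (E := ℂ)).continuous
      (Set.mem_image_of_mem _ hg)
  exact closure_mono hmap hcl

lemma total : (Submodule.span ℂ (Set.range fun n : ℤ => e n)).topologicalClosure = ⊤ := by
  rw [Submodule.eq_top_iff']
  intro f
  have hd := ContinuousMap.toLp_denseRange (α := Circle) (E := ℂ) (μ := m) (𝕜 := ℂ) (p := 2)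
    (by norm_num)
  have hf : f ∈ closure (Set.range (ContinuousMap.toLp 2 m ℂ (E := ℂ))) := hd f
  have hsub : Set.range (ContinuousMap.toLp 2 m ℂ (E := ℂ)) ⊆
      ((Submodule.span ℂ (Set.range fun n : ℤ => e n)).topologicalClosure : Set L2) := by
    rintro _ ⟨g, rfl⟩
    exact toLp_mem_closure g
  have := closure_mono hsub hf
  rwa [IsClosed.closure_eq (Submodule.isClosed_topologicalClosure _)] at this

lemma e_neg_mem_orth {j : ℤ} (hj : j < 0) : e j ∈ H2ᗮ := by
  have : H2 ≤ (ℂ ∙ (e j))ᗮ := by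
    apply Submodule.topologicalClosure_minimal
    · rw [Submodule.span_le]
      rintro _ ⟨n, rfl⟩
      rw [SetLike.mem_coe, Submodule.mem_orthogonal_singleton_iff_inner_right]
      exact inner_e (by omega)
    · exact Submodule.isClosed_orthogonal _
  rw [Submodule.mem_orthogonal]
  intro u hu
  rw [inner_eq_zero_symm]
  exact Submodule.mem_orthogonal_singleton_iff_inner_right.mp (this hu)

lemma mem_H2_of_inner {x : L2} (hx : ∀ j : ℤ, j < 0 → ⟪e j, x⟫ = 0) : x ∈ H2 := by
  classical
  set Sneg : Submodule ℂ L2 := Submodule.span ℂ (Set.range fun k : ℕ => e (-(k : ℤ) - 1))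
    with hSneg
  set K := Sneg.topologicalClosure with hKdef
  haveI : CompleteSpace K := (Submodule.isClosed_topologicalClosure Sneg).completeSpace_coe
  have horthK : K ≤ H2ᗮ := by
    apply Submodule.topologicalClosure_minimal
    · rw [Submodule.span_le]
      rintro _ ⟨k, rfl⟩
      exact e_neg_mem_orth (by omega)
    · exact Submodule.isClosed_orthogonal _
  have hHK : H2ᗮ ≤ K := by
    intro y hy
    set z := y - (K.orthogonalProjectionOnto y : L2) with hz
    have hzK : z ∈ Kᗮ := K.sub_starProjection_mem_orthogonal y
    have hzH : z ∈ H2ᗮ := Submodule.sub_mem _ hy (horthK (SetLike.coe_mem _))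
    have hz0 : z = 0 := by
      have hall : z ∈ (Submodule.span ℂ (Set.range fun n : ℤ => e n))ᗮ := by
        rw [Submodule.mem_orthogonal]
        intro u hu
        induction hu using Submodule.span_induction with
        | mem u hu =>
          obtain ⟨n, rfl⟩ := hu
          by_cases hn : 0 ≤ n
          · have hmem : e n ∈ H2 := by
              have := e_mem_H2 n.toNat
              rwa [show ((n.toNat : ℤ)) = n by omega] at this
            exact (Submodule.mem_orthogonal H2 z).mp hzH _ hmem
          · have hmem : e n ∈ K := by
              apply Submodule.le_topologicalClosure
              apply Submodule.subset_span
              refine ⟨(-n - 1).toNat, ?_⟩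
              have harg : -(((-n - 1).toNat : ℤ)) - 1 = n := by omega
              simp only [harg]
            exact (Submodule.mem_orthogonal K z).mp hzK _ hmem
        | zero => exact inner_zero_left _
        | add u v hu hv h1 h2 => rw [inner_add_left, h1, h2, add_zero]
        | smul c u hu h1 => rw [inner_smul_left, h1, mul_zero]
      have hbot : (Submodule.span ℂ (Set.range fun n : ℤ => e n))ᗮ = ⊥ := by
        rw [← Submodule.topologicalClosure_eq_top_iff]
        exact total
      rw [hbot, Submodule.mem_bot] at hall
      exact hall
    have : y = (K.orthogonalProjectionOnto y : L2) := by rwa [← sub_eq_zero]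
    rw [this]
    exact SetLike.coe_mem _
  have hK : H2ᗮ = K := le_antisymm hHK horthK
  rw [← Submodule.orthogonal_orthogonal H2, hK, hKdef,
    ← Submodule.orthogonal_orthogonal_eq_closure, Submodule.triorthogonal_eq_orthogonal,
    Submodule.mem_orthogonal]
  intro u hu
  induction hu using Submodule.span_induction with
  | mem u hu =>
    obtain ⟨k, rfl⟩ := hu
    exact hx _ (by omega)
  | zero => exact inner_zero_left _
  | add u v hu hv h1 h2 => rw [inner_add_left, h1, h2, add_zero]
  | smul c u hu h1 => rw [inner_smul_left, h1, mul_zero]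


lemma integral_pow_nat (n : ℕ) :
    ∫ z : Circle, ((z : ℂ)) ^ n ∂m = if n = 0 then 1 else 0 := by
  rcases eq_or_ne n 0 with hn | hn
  · subst hn
    simp only [pow_zero, if_pos rfl]
    rw [MeasureTheory.integral_const, probReal_univ]
    simp
  · rw [if_neg hn]
    have : ∀ z : Circle, ((z : ℂ)) ^ n = ((z : ℂ)) ^ (n : ℤ) := fun z => (zpow_natCast _ n).symm
    simp_rw [this]
    exact integral_char (by exact_mod_cast hn)

/-- mean value property of the Haar measure for functions analytic near the closed disc -/
lemma integral_eq_of_differentiableOn {g : ℂ → ℂ} {R : NNReal} (hR : 1 < (R : ℝ))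
    (hg : DifferentiableOn ℂ g (Metric.closedBall 0 R)) :
    ∫ z : Circle, g (z : ℂ) ∂m = g 0 := by
  have hR0 : 0 < R := by exact_mod_cast lt_trans zero_lt_one hR
  have h := hg.hasFPowerSeriesOnBall hR0
  set p := cauchyPowerSeries g 0 R with hp
  have hrad : (1 : ENNReal) < p.radius :=
    lt_of_lt_of_le (by exact_mod_cast hR) h.r_le
  have hsum : Summable fun n => ‖p n‖ * (1 : ℝ) ^ n :=
    p.summable_norm_mul_pow (r := 1) (by exact_mod_cast hrad)
  have hc : Summable fun n => ‖p.coeff n‖ := by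
    refine Summable.of_nonneg_of_le (fun n => norm_nonneg _) (fun n => ?_) hsum
    have h1 := (p n).le_opNorm fun _ => (1 : ℂ)
    simp only [norm_one, Finset.prod_const_one, mul_one, one_pow] at h1 ⊢
    exact h1
  have hgz : ∀ z : Circle, HasSum (fun n => p.coeff n * ((z : ℂ)) ^ n) (g z) := by
    intro z
    have hz : (z : ℂ) ∈ EMetric.ball (0 : ℂ) R := by
      show edist (z : ℂ) 0 < R
      rw [edist_zero_right]
      have : ‖(z : ℂ)‖₊ = 1 := by
        ext
        simpa using Circle.norm_coe z
      rw [enorm_eq_nnnorm, this]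
      exact_mod_cast hR
    have h2 := h.hasSum hz
    simp only [FormalMultilinearSeries.apply_eq_pow_smul_coeff, smul_eq_mul, zero_add] at h2
    convert h2 using 2 with n
    · rfl
    ring
  have hnorm : ∀ (n : ℕ) (z : Circle), ‖p.coeff n * ((z : ℂ)) ^ n‖₊ = ‖p.coeff n‖₊ := by
    intro n z
    ext
    simp [norm_mul, Circle.norm_coe]
  have hcont : Continuous fun z : Circle => (z : ℂ) := continuous_subtype_val
  have hmeas : ∀ n : ℕ, AEStronglyMeasurable (fun z : Circle => p.coeff n * ((z : ℂ)) ^ n) m :=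
    fun n => Continuous.aestronglyMeasurable (α := Circle) (continuous_const.mul (hcont.pow n))
  have hlint : ∑' n : ℕ, ∫⁻ z : Circle, ‖p.coeff n * ((z : ℂ)) ^ n‖₊ ∂m ≠ ⊤ := by
    have heq : ∀ n : ℕ, ∫⁻ z : Circle, ‖p.coeff n * ((z : ℂ)) ^ n‖₊ ∂m
        = (‖p.coeff n‖₊ : ENNReal) := by
      intro n
      simp_rw [hnorm n]
      rw [MeasureTheory.lintegral_const, measure_univ, mul_one]
    simp_rw [heq]
    rw [ENNReal.tsum_coe_ne_top_iff_summable]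
    rw [← NNReal.summable_coe]
    simpa [coe_nnnorm] using hc
  have hint : ∫ z : Circle, g (z : ℂ) ∂m
      = ∑' n : ℕ, ∫ z : Circle, p.coeff n * ((z : ℂ)) ^ n ∂m := by
    rw [← MeasureTheory.integral_tsum hmeas hlint]
    apply integral_congr_ae
    filter_upwards with z
    exact ((hgz z).tsum_eq).symm
  have hterm : ∀ n : ℕ, ∫ z : Circle, p.coeff n * ((z : ℂ)) ^ n ∂m
      = if n = 0 then p.coeff 0 else 0 := by
    intro n
    rw [MeasureTheory.integral_const_mul, integral_pow_nat]
    rcases eq_or_ne n 0 with hn | hn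
    · simp [hn]
    · simp [hn]
  rw [hint]
  simp_rw [hterm]
  rw [tsum_eq_single 0 (fun n hn => by rw [if_neg hn])]
  rw [if_pos rfl]
  exact h.coeff_zero fun _ => (1 : ℂ)


lemma blaschkeFactor_differentiableAt {α z : ℂ} (h : ‖α‖ * ‖z‖ < 1) :
    DifferentiableAt ℂ (blaschkeFactor α) z := by
  by_cases hα : α = 0
  · have : blaschkeFactor α = fun w => w := funext fun w => by simp [blaschkeFactor, hα]
    rw [this]
    exact differentiableAt_id
  · have : blaschkeFactor α = fun w =>
        ((‖α‖ : ℂ) / α) * ((α - w) / (1 - conj α * w)) :=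
      funext fun w => by simp [blaschkeFactor, hα]
    rw [this]
    have hden : 1 - conj α * z ≠ 0 := by
      intro h0
      have h1 : conj α * z = 1 := by linear_combination -h0
      have h2 : ‖conj α * z‖ = 1 := by rw [h1]; simp
      rw [norm_mul, Complex.norm_conj] at h2
      rw [h2] at h
      exact lt_irrefl 1 h
    exact (differentiableAt_const _).mul
      (((differentiableAt_const _).sub differentiableAt_id).div
        ((differentiableAt_const _).sub ((differentiableAt_const _).mul differentiableAt_id))
        hden)

lemma blaschkeFactor_ne_zero {α z : ℂ} (hα : ‖α‖ < 1) (hz : ‖z‖ = 1) :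
    blaschkeFactor α z ≠ 0 := by
  by_cases hα0 : α = 0
  · simp only [blaschkeFactor, if_pos hα0]
    intro h0
    rw [h0] at hz
    simp at hz
  · simp only [blaschkeFactor, if_neg hα0]
    have hnum : α - z ≠ 0 := by
      intro h0
      have : α = z := by linear_combination h0
      rw [this, hz] at hα
      exact lt_irrefl 1 hα
    have hden : 1 - conj α * z ≠ 0 := by
      intro h0
      have h1 : conj α * z = 1 := by linear_combination -h0
      have h2 : ‖conj α * z‖ = 1 := by rw [h1]; simp
      rw [norm_mul, Complex.norm_conj, hz, mul_one] at h2
      rw [h2] at hα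
      exact lt_irrefl 1 hα
    have hc : ((‖α‖ : ℂ)) / α ≠ 0 :=
      div_ne_zero (Complex.ofReal_ne_zero.mpr (norm_ne_zero_iff.mpr hα0)) hα0
    exact mul_ne_zero hc (div_ne_zero hnum hden)

lemma finBlaschke_ne_zero {N : ℕ} {a : Fin N → ℂ} (ha : ∀ j, ‖a j‖ < 1)
    {z : ℂ} (hz : ‖z‖ = 1) : finBlaschke a z ≠ 0 := by
  unfold finBlaschke
  rw [Finset.prod_ne_zero_iff]
  exact fun j _ => blaschkeFactor_ne_zero (ha j) hz

lemma key_integral {N : ℕ} (hN : 0 < N) (a : Fin N → ℂ)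
    (ha : ∀ j, ‖a j‖ < 1) (k n : ℕ) (hk : 1 ≤ k) :
    ∫ z : Circle, (finBlaschke a ((z : ℂ))) ^ k * J0 a (z : ℂ) * ((z : ℂ)) ^ n ∂m = 0 := by
  haveI : Nonempty (Fin N) := Fin.pos_iff_nonempty.mp hN
  set M : ℝ := Finset.univ.sup' Finset.univ_nonempty fun j => ‖a j‖ with hM
  have hM0 : 0 ≤ M :=
    le_trans (norm_nonneg (a (Classical.arbitrary (Fin N))))
      (Finset.le_sup' (fun j => ‖a j‖)
        (Finset.mem_univ (Classical.arbitrary (Fin N))))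
  have hM1 : M < 1 := by
    rw [hM, Finset.sup'_lt_iff]
    exact fun j _ => ha j
  set r : ℝ := 2 / (1 + M) with hr
  have hr1 : 1 < r := by
    rw [hr, lt_div_iff₀ (by linarith)]
    linarith
  have hcond : ∀ z : ℂ, ‖z‖ < r → ∀ j, ‖a j‖ * ‖z‖ < 1 := by
    intro z hz j
    have hj : ‖a j‖ ≤ M :=
      Finset.le_sup' (fun j => ‖a j‖) (Finset.mem_univ j)
    have h1 : ‖a j‖ * ‖z‖ ≤ M * ‖z‖ :=
      mul_le_mul_of_nonneg_right hj (norm_nonneg z)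
    have h2 : M * ‖z‖ ≤ M * r := mul_le_mul_of_nonneg_left hz.le hM0
    have h3 : M * r < 1 := by
      rw [hr, ← mul_div_assoc, div_lt_one (by linarith : (0:ℝ) < 1 + M)]
      linarith
    linarith
  set U : Set ℂ := Metric.ball (0 : ℂ) r with hU
  have hBdiff : ∀ z ∈ U, DifferentiableAt ℂ (finBlaschke a) z := by
    intro z hz
    rw [hU, Metric.mem_ball, dist_zero_right] at hz
    have : DifferentiableAt ℂ (fun w => ∏ j, blaschkeFactor (a j) w) z :=
      DifferentiableAt.fun_finsetProd fun j _ =>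
        blaschkeFactor_differentiableAt (hcond z hz j)
    exact this
  have hBdiffOn : DifferentiableOn ℂ (finBlaschke a) U :=
    fun z hz => (hBdiff z hz).differentiableWithinAt
  have hBan : AnalyticOnNhd ℂ (finBlaschke a) U := hBdiffOn.analyticOnNhd Metric.isOpen_ball
  have hB'an : AnalyticOnNhd ℂ (deriv (finBlaschke a)) U := hBan.deriv
  set R : NNReal := ⟨(1 + r) / 2, by linarith⟩ with hR
  have hR1 : 1 < (R : ℝ) := by
    rw [hR]
    change 1 < (1 + r) / 2
    linarith
  have hRr : (R : ℝ) < r := by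
    rw [hR]
    change (1 + r) / 2 < r
    linarith
  set G : ℂ → ℂ := fun z => z ^ (n + 1) * (finBlaschke a z) ^ (k - 1) * deriv (finBlaschke a) z
    with hG
  have hGdiff : DifferentiableOn ℂ G (Metric.closedBall 0 R) := by
    intro z hz
    rw [Metric.mem_closedBall, dist_zero_right] at hz
    have hzU : z ∈ U := by
      rw [hU, Metric.mem_ball, dist_zero_right]
      exact lt_of_le_of_lt hz hRr
    exact (((differentiableAt_id.pow _).mul ((hBdiff z hzU).pow _)).mul
      (hB'an z hzU).differentiableAt).differentiableWithinAt
  have hmean := integral_eq_of_differentiableOn hR1 hGdiff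
  have hG0 : G 0 = 0 := by
    rw [hG]
    simp
  have hN' : ((N : ℂ)) ≠ 0 := Nat.cast_ne_zero.mpr hN.ne'
  have hpt : ∀ z : Circle, (finBlaschke a ((z : ℂ))) ^ k * J0 a (z : ℂ) * ((z : ℂ)) ^ n
      = ((N : ℂ))⁻¹ * G (z : ℂ) := by
    intro z
    have hB0 : finBlaschke a (z : ℂ) ≠ 0 := finBlaschke_ne_zero ha (Circle.norm_coe z)
    have hkk : (finBlaschke a ((z : ℂ))) ^ k
        = (finBlaschke a ((z : ℂ))) ^ (k - 1) * finBlaschke a ((z : ℂ)) := by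
      rw [← pow_succ]
      congr 1
      omega
    rw [hG, J0]
    field_simp
    rw [hkk]
    ring
  calc ∫ z : Circle, (finBlaschke a ((z : ℂ))) ^ k * J0 a (z : ℂ) * ((z : ℂ)) ^ n ∂m
      = ∫ z : Circle, ((N : ℂ))⁻¹ * G (z : ℂ) ∂m := by
        apply integral_congr_ae
        filter_upwards with z
        exact hpt z
    _ = ((N : ℂ))⁻¹ * ∫ z : Circle, G (z : ℂ) ∂m := MeasureTheory.integral_const_mul _ _
    _ = 0 := by rw [hmean, hG0, mul_zero]


lemma exists_open_analytic {N : ℕ} (hN : 0 < N) (a : Fin N → ℂ)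
    (ha : ∀ j, ‖a j‖ < 1) :
    ∃ U : Set ℂ, IsOpen U ∧ (∀ z : Circle, (z : ℂ) ∈ U) ∧
      AnalyticOnNhd ℂ (finBlaschke a) U ∧ AnalyticOnNhd ℂ (deriv (finBlaschke a)) U := by
  haveI : Nonempty (Fin N) := Fin.pos_iff_nonempty.mp hN
  set M : ℝ := Finset.univ.sup' Finset.univ_nonempty fun j => ‖a j‖ with hM
  have hM0 : 0 ≤ M :=
    le_trans (norm_nonneg (a (Classical.arbitrary (Fin N))))
      (Finset.le_sup' (fun j => ‖a j‖)
        (Finset.mem_univ (Classical.arbitrary (Fin N))))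
  have hM1 : M < 1 := by
    rw [hM, Finset.sup'_lt_iff]
    exact fun j _ => ha j
  set r : ℝ := 2 / (1 + M) with hr
  have hr1 : 1 < r := by
    rw [hr, lt_div_iff₀ (by linarith)]
    linarith
  have hcond : ∀ z : ℂ, ‖z‖ < r → ∀ j, ‖a j‖ * ‖z‖ < 1 := by
    intro z hz j
    have hj : ‖a j‖ ≤ M :=
      Finset.le_sup' (fun j => ‖a j‖) (Finset.mem_univ j)
    have h1 : ‖a j‖ * ‖z‖ ≤ M * ‖z‖ :=
      mul_le_mul_of_nonneg_right hj (norm_nonneg z)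
    have h2 : M * ‖z‖ ≤ M * r := mul_le_mul_of_nonneg_left hz.le hM0
    have h3 : M * r < 1 := by
      rw [hr, ← mul_div_assoc, div_lt_one (by linarith : (0:ℝ) < 1 + M)]
      linarith
    linarith
  refine ⟨Metric.ball (0 : ℂ) r, Metric.isOpen_ball, ?_, ?_, ?_⟩
  · intro z
    rw [Metric.mem_ball, dist_zero_right]
    have : ‖(z : ℂ)‖ = 1 := Circle.norm_coe z
    rw [this]
    exact hr1
  · refine DifferentiableOn.analyticOnNhd ?_ Metric.isOpen_ball
    intro z hz
    rw [Metric.mem_ball, dist_zero_right] at hz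
    exact (DifferentiableAt.fun_finsetProd fun j _ =>
      blaschkeFactor_differentiableAt (hcond z hz j)).differentiableWithinAt
  · refine AnalyticOnNhd.deriv ?_
    refine DifferentiableOn.analyticOnNhd ?_ Metric.isOpen_ball
    intro z hz
    rw [Metric.mem_ball, dist_zero_right] at hz
    exact (DifferentiableAt.fun_finsetProd fun j _ =>
      blaschkeFactor_differentiableAt (hcond z hz j)).differentiableWithinAt

lemma cont_res_B {N : ℕ} (hN : 0 < N) (a : Fin N → ℂ) (ha : ∀ j, ‖a j‖ < 1) :
    Continuous (res (finBlaschke a)) := by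
  obtain ⟨U, hUo, hUc, hB, -⟩ := exists_open_analytic hN a ha
  rw [continuous_iff_continuousAt]
  intro z
  exact ((hB _ (hUc z)).continuousAt).comp continuousAt_subtype_val

lemma cont_res_J0 {N : ℕ} (hN : 0 < N) (a : Fin N → ℂ) (ha : ∀ j, ‖a j‖ < 1) :
    Continuous (res (J0 a)) := by
  obtain ⟨U, hUo, hUc, hB, hB'⟩ := exists_open_analytic hN a ha
  have hN' : ((N : ℂ)) ≠ 0 := Nat.cast_ne_zero.mpr hN.ne'
  have hcoe : Continuous fun z : Circle => (z : ℂ) := continuous_subtype_val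
  have hBc : Continuous (res (finBlaschke a)) := cont_res_B hN a ha
  have hB'c : Continuous fun z : Circle => deriv (finBlaschke a) ((z : ℂ)) := by
    rw [continuous_iff_continuousAt]
    intro z
    exact ((hB' _ (hUc z)).continuousAt).comp continuousAt_subtype_val
  have : res (J0 a) = fun z : Circle =>
      ((z : ℂ)) * deriv (finBlaschke a) ((z : ℂ)) / ((N : ℂ) * finBlaschke a ((z : ℂ))) :=
    rfl
  rw [this]
  exact (hcoe.mul hB'c).div (continuous_const.mul hBc)
    fun z => mul_ne_zero hN' (finBlaschke_ne_zero ha (Circle.norm_coe z))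

lemma inner_gamma_mul {N : ℕ} (hN : 0 < N) (a : Fin N → ℂ)
    (ha : ∀ j, ‖a j‖ < 1) {j : ℤ} (hj : j < 0) (n : ℕ) :
    ⟪toL2 (zpowFun (res (finBlaschke a)) j), mul (res (J0 a)) (e n)⟫ = 0 := by
  set k : ℕ := (-j).toNat with hkdef
  have hk : 1 ≤ k := by omega
  have hBc : Continuous (res (finBlaschke a)) := cont_res_B hN a ha
  have hzp : zpowFun (res (finBlaschke a)) j
      = fun z => conj (res (finBlaschke a) z) ^ k := by
    funext z
    rw [zpowFun, if_neg (not_le.mpr hj)]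
  have hzc : Continuous (zpowFun (res (finBlaschke a)) j) := by
    rw [hzp]
    exact (RCLike.continuous_conj.comp hBc).pow k
  have hmem2 : MemLp (zpowFun (res (finBlaschke a)) j) 2 m := memLp_two_of_continuous hzc
  have hJm : MemLp (res (J0 a)) ⊤ m := memLp_top_of_continuous (cont_res_J0 hN a ha)
  rw [toL2, dif_pos hmem2, mul, dif_pos hJm]
  rw [MeasureTheory.L2.inner_def]
  have h1 := MeasureTheory.MemLp.coeFn_toLp hmem2
  have h2 : ⇑(mulCLM (res (J0 a)) hJm (e n)) =ᵐ[m] (res (J0 a)) • ⇑(e n) :=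
    MeasureTheory.MemLp.coeFn_toLp ((Lp.memLp (e n)).smul (r := 2) hJm)
  have h3 : (⇑(e (n : ℤ)) : Circle → ℂ) =ᵐ[m] ⇑(χ (n : ℤ)) :=
    ContinuousMap.coeFn_toLp (p := 2) (μ := m) (𝕜 := ℂ) (χ (n : ℤ))
  have hcal : ∫ z : Circle, ⟪(hmem2.toLp (zpowFun (res (finBlaschke a)) j)) z,
        (mulCLM (res (J0 a)) hJm (e n)) z⟫ ∂m
      = ∫ z : Circle, (finBlaschke a ((z : ℂ))) ^ k * J0 a (z : ℂ) * ((z : ℂ)) ^ n ∂m := by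
    apply integral_congr_ae
    filter_upwards [h1, h2, h3] with z hz1 hz2 hz3
    rw [hz1, hz2]
    simp only [Pi.smul_apply, Pi.mul_apply, smul_eq_mul]
    rw [hz3, RCLike.inner_apply, hzp]
    rw [map_pow, Complex.conj_conj, χ_apply, zpow_natCast]
    simp only [res]
    ring
  rw [hcal]
  exact key_integral hN a ha k n hk


/-- The canonical transfer operator `𝓛 = Γ_b* π(J₀)` of a finite
Blaschke product leaves the Hardy space `H²(𝕋)` invariant. -/
theorem statement14 {N : ℕ} (hN : 0 < N) (a : Fin N → ℂ)
    (ha : ∀ j, ‖a j‖ < 1)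
    (Γ : L2 →L[ℂ] L2) (hΓ : IsGamma a Γ) :
    ∀ f : L2, f ∈ H2 → ContinuousLinearMap.adjoint Γ (mul (res (J0 a)) f) ∈ H2 := by
  intro f hf
  set T : L2 →L[ℂ] L2 := (ContinuousLinearMap.adjoint Γ).comp (mul (res (J0 a))) with hT
  have hTf : ContinuousLinearMap.adjoint Γ (mul (res (J0 a)) f) = T f := rfl
  rw [hTf]
  have hgen : ∀ n : ℕ, T (e n) ∈ H2 := by
    intro n
    apply mem_H2_of_inner
    intro j hj
    have h1 : ⟪e j, T (e n)⟫ = ⟪Γ (e j), mul (res (J0 a)) (e n)⟫ := by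
      rw [hT, ContinuousLinearMap.comp_apply]
      exact ContinuousLinearMap.adjoint_inner_right Γ _ _
    rw [h1, hΓ j]
    exact inner_gamma_mul hN a ha hj n
  have hsub : H2 ≤ Submodule.comap (T : L2 →ₗ[ℂ] L2) H2 := by
    apply Submodule.topologicalClosure_minimal
    · rw [Submodule.span_le]
      rintro _ ⟨n, rfl⟩
      exact hgen n
    · exact H2_isClosed.preimage T.continuous
  exact hsub hf

end CompEnd
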